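/- Let X be a Banach space with the Radon–Nikodým property (so that B_X is the closed convex hull of its denting points) and let x ∈ S_X. Then x is a Daugavet-point if and only if ‖x − y‖ = 2 for every denting point y of B_X. -/
import Mathlib


/-- `x` is a Daugavet-point: every slice `S(f,α)` of the unit ball contains, for
every `ε > 0`, an element at distance at least `2 - ε` from `x`. -/
def IsDaugavetPoint {X : Type*} [NormedAddCommGroup X] [NormedSpace ℝ X]
    (x : X) : Prop :=
  ∀ f : X →L[ℝ] ℝ, ‖f‖ = 1 → ∀ α : ℝ, 0 < α → ∀ ε : ℝ, 0 < ε →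
    ∃ y : X, ‖y‖ ≤ 1 ∧ f y > 1 - α ∧ 2 - ε ≤ ‖x - y‖

/-- `y` is a denting point of the unit ball: `‖y‖ ≤ 1` and `y` belongs to slices of
the unit ball of arbitrarily small diameter. -/
def IsDentingPoint {X : Type*} [NormedAddCommGroup X] [NormedSpace ℝ X]
    (y : X) : Prop :=
  ‖y‖ ≤ 1 ∧ ∀ ε : ℝ, 0 < ε → ∃ f : X →L[ℝ] ℝ, ∃ α : ℝ, ‖f‖ = 1 ∧ 0 < α ∧
    f y > 1 - α ∧ ∀ w w' : X, ‖w‖ ≤ 1 → f w > 1 - α → ‖w'‖ ≤ 1 → f w' > 1 - α →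
      ‖w - w'‖ < ε

/-- in a Banach space whose unit ball is the closed convex hull of its
denting points (as happens under the Radon–Nikodým property), a norm-one point `x`
is a Daugavet-point if and only if `‖x - y‖ = 2` for every denting point `y` of the
unit ball. -/
theorem stmt19 {X : Type*} [NormedAddCommGroup X] [NormedSpace ℝ X]
    [CompleteSpace X] (x : X) (hx : ‖x‖ = 1)
    (hRNP : closure (convexHull ℝ {y : X | IsDentingPoint y}) =
      Metric.closedBall (0 : X) 1) :
    IsDaugavetPoint x ↔ ∀ y : X, IsDentingPoint y → ‖x - y‖ = 2 := by
  constructor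
  · -- Forward: Daugavet-point ⇒ distance 2 from every denting point
    intro hD y hy
    obtain ⟨hy1, hy2⟩ := hy
    have h2 : ‖x - y‖ ≤ 2 := by
      calc ‖x - y‖ ≤ ‖x‖ + ‖y‖ := norm_sub_le x y
        _ ≤ 2 := by rw [hx]; linarith
    have h1 : ∀ ε : ℝ, 0 < ε → 2 - 2 * ε ≤ ‖x - y‖ := by
      intro ε hε
      obtain ⟨f, α, hf, hα, hfy, hdiam⟩ := hy2 ε hε
      obtain ⟨z, hz1, hz2, hz3⟩ := hD f hf α hα ε hε
      have hzy : ‖y - z‖ < ε := hdiam y z hy1 hfy hz1 hz2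
      have : ‖x - z‖ ≤ ‖x - y‖ + ‖y - z‖ := norm_sub_le_norm_sub_add_norm_sub x y z
      linarith
    by_contra hne
    have hlt : ‖x - y‖ < 2 := lt_of_le_of_ne h2 hne
    have := h1 ((2 - ‖x - y‖) / 4) (by linarith)
    linarith
  · -- Backward: every slice contains a denting point, which is at distance 2
    intro hall f hf α hα ε hε
    -- find a denting point in the slice S(f, α)
    have hhalf : (0:ℝ) < α / 2 := by linarith
    obtain ⟨z0, hz0, hz0f⟩ := f.exists_lt_apply_of_lt_opNorm
      (r := 1 - α / 2) (by rw [hf]; linarith)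
    -- choose z with f z = |f z0|
    set z : X := if 0 ≤ f z0 then z0 else -z0 with hzdef
    have hzn : ‖z‖ ≤ 1 := by
      rcases le_or_gt 0 (f z0) with h | h <;> simp [hzdef, h, not_le.mpr, le_of_lt hz0]
    have hzf : 1 - α / 2 < f z := by
      rcases le_or_gt 0 (f z0) with h | h
      · simp only [hzdef, if_pos h]
        rwa [Real.norm_eq_abs, abs_of_nonneg h] at hz0f
      · simp only [hzdef, if_neg (not_le.mpr h), map_neg]
        rwa [Real.norm_eq_abs, abs_of_neg h] at hz0f
    have hzmem : z ∈ closure (convexHull ℝ {y : X | IsDentingPoint y}) := by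
      rw [hRNP, Metric.mem_closedBall, dist_zero_right]; exact hzn
    obtain ⟨w, hw, hwz⟩ := Metric.mem_closure_iff.mp hzmem (α / 2) hhalf
    have hfwz : |f (z - w)| ≤ ‖z - w‖ := by
      calc |f (z - w)| = ‖f (z - w)‖ := (Real.norm_eq_abs _).symm
        _ ≤ ‖f‖ * ‖z - w‖ := f.le_opNorm _
        _ = ‖z - w‖ := by rw [hf, one_mul]
    have hzw : ‖z - w‖ < α / 2 := by rwa [← dist_eq_norm]
    have hfw : 1 - α < f w := by
      have := abs_le.mp hfwz
      have hmap : f (z - w) = f z - f w := map_sub f z w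
      linarith [this.2, hzf]
    -- w is in the convex hull; if no denting point were in the slice, we'd get f w ≤ 1 - α
    by_contra hcon
    push_neg at hcon
    have hsub : {y : X | IsDentingPoint y} ⊆ {v : X | f v ≤ 1 - α} := by
      intro y hy
      by_contra hyf
      simp only [Set.mem_setOf_eq, not_le] at hyf
      have hlt := hcon y hy.1 hyf
      have h2 : ‖x - y‖ = 2 := hall y hy
      linarith
    have hconfw : f w ≤ 1 - α := by
      have hcvx : Convex ℝ {v : X | f v ≤ 1 - α} :=
        convex_halfSpace_le (f.toLinearMap.isLinear) _
      exact convexHull_min hsub hcvx hw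
    linarith
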